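/- arXiv:2402.02546 — 2 statements merged into one kernel-verified Lean document; each statement's English description precedes it below -/
import Mathlib

section
/- Let L = λ*(38/5) and set C = (1/16)·(1/L − L)². Then λ*(19/10) = √((√(4C + 1) − 1)/C) / √2. -/
open Real

/-- Rogers–Ramanujan continued fraction (product form), for `0 < q < 1`. -/
noncomputable def RR (q : ℝ) : ℝ :=
  q ^ ((1:ℝ)/5) *
    ∏' n : ℕ, ((1 - q ^ (5*n+4)) * (1 - q ^ (5*n+1))) /
      ((1 - q ^ (5*n+3)) * (1 - q ^ (5*n+2)))

/-- Ramanujan's theta function `f(-q) = ∏ (1 - q^k)`. -/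
noncomputable def fneg (q : ℝ) : ℝ := ∏' k : ℕ, (1 - q ^ (k+1))

/-- Ramanujan's class invariant `G_n`. -/
noncomputable def Gn (n : ℝ) : ℝ :=
  2 ^ (-(1:ℝ)/4) * Real.exp (π * Real.sqrt n / 24) *
    ∏' j : ℕ, (1 + Real.exp (-((2*(j:ℝ)+1) * π * Real.sqrt n)))

/-- Ramanujan's class invariant `g_n`. -/
noncomputable def gn (n : ℝ) : ℝ :=
  2 ^ (-(1:ℝ)/4) * Real.exp (π * Real.sqrt n / 24) *
    ∏' j : ℕ, (1 - Real.exp (-((2*(j:ℝ)+1) * π * Real.sqrt n)))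

/-- Jacobi theta function `θ₂(0, q)`. -/
noncomputable def theta2 (q : ℝ) : ℝ := 2 * q ^ ((1:ℝ)/4) * ∑' n : ℕ, q ^ (n*(n+1))

/-- Jacobi theta function `θ₃(0, q)`. -/
noncomputable def theta3 (q : ℝ) : ℝ := 1 + 2 * ∑' n : ℕ, q ^ ((n+1)^2)

/-- The elliptic lambda-star function. -/
noncomputable def lambdaStar (r : ℝ) : ℝ :=
  theta2 (Real.exp (-(π * Real.sqrt r))) ^ 2 /
    theta3 (Real.exp (-(π * Real.sqrt r))) ^ 2

section ThetaAux

variable {q : ℝ}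

lemma summable_rpow_aux (hq0 : 0 < q) (hq1 : q < 1) {c : ℤ → ℝ}
    (hc : ∀ n : ℤ, |(n : ℝ)| - 1 ≤ c n) : Summable fun n : ℤ => q ^ c n := by
  have base : Summable fun n : ℤ => q ^ (|(n : ℝ)| - 1) := by
    apply Summable.of_nat_of_neg_add_one
    · apply Summable.congr ((summable_geometric_of_lt_one hq0.le hq1).div_const q)
      intro n
      rw [Real.rpow_sub hq0, Real.rpow_one]
      norm_num [abs_of_nonneg (n.cast_nonneg : (0:ℝ) ≤ n), Real.rpow_natCast]
    · apply Summable.congr (summable_geometric_of_lt_one hq0.le hq1)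
      intro n
      have h1 : |(((-((n : ℤ) + 1)) : ℤ) : ℝ)| - 1 = (n : ℝ) := by
        push_cast
        rw [abs_neg, abs_of_nonneg (by positivity)]
        ring
      rw [h1, Real.rpow_natCast]
  exact Summable.of_nonneg_of_le (fun n => (Real.rpow_pos_of_pos hq0 _).le)
    (fun n => Real.rpow_le_rpow_of_exponent_ge hq0 hq1.le (hc n)) base

lemma summable_sq (hq0 : 0 < q) (hq1 : q < 1) :
    Summable fun n : ℤ => q ^ ((n : ℝ) ^ 2) := by
  apply summable_rpow_aux hq0 hq1
  intro n
  rcases abs_cases ((n : ℝ)) with ⟨h, _⟩ | ⟨h, _⟩ <;> nlinarith [sq_nonneg ((n:ℝ) - 1), sq_nonneg ((n:ℝ) + 1)]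

lemma summable_tri (hq0 : 0 < q) (hq1 : q < 1) :
    Summable fun n : ℤ => q ^ ((n : ℝ) * ((n : ℝ) + 1)) := by
  apply summable_rpow_aux hq0 hq1
  intro n
  rcases abs_cases ((n : ℝ)) with ⟨h, _⟩ | ⟨h, _⟩ <;> nlinarith [sq_nonneg ((n:ℝ) + 1)]

lemma summable_sgn_sq (hq0 : 0 < q) (hq1 : q < 1) :
    Summable fun n : ℤ => ((-1 : ℝ) ^ n) * q ^ ((n : ℝ) ^ 2) := by
  apply Summable.of_norm
  apply Summable.congr (summable_sq hq0 hq1)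
  intro n
  rw [norm_mul, norm_zpow]
  simp [abs_of_pos (Real.rpow_pos_of_pos hq0 _), Real.norm_eq_abs]

/-- Split a sum over ℤ×ℤ by parity of the coordinate sum. -/
lemma split_parity (F : ℤ × ℤ → ℝ) (hF : Summable F) :
    ∑' p, F p = (∑' p : ℤ × ℤ, F (p.1 + p.2, p.1 - p.2))
      + ∑' p : ℤ × ℤ, F (p.1 + p.2 + 1, p.1 - p.2) := by
  set s : Set (ℤ × ℤ) := {p | (p.1 + p.2) % 2 = 0} with hs
  let e1 : ℤ × ℤ ≃ s := by
    refine Equiv.ofBijective (fun p => ⟨(p.1 + p.2, p.1 - p.2), by simp [hs]; omega⟩) ⟨?_, ?_⟩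
    · rintro ⟨u, v⟩ ⟨u', v'⟩ h
      simp only [Subtype.mk.injEq, Prod.mk.injEq] at h
      have : u = u' ∧ v = v' := by omega
      exact Prod.ext this.1 this.2
    · rintro ⟨⟨m, n⟩, h⟩
      simp only [hs, Set.mem_setOf_eq] at h
      refine ⟨((m + n) / 2, (m - n) / 2), ?_⟩
      simp only [Subtype.mk.injEq, Prod.mk.injEq]
      omega
  let e2 : ℤ × ℤ ≃ (sᶜ : Set (ℤ × ℤ)) := by
    refine Equiv.ofBijective (fun p => ⟨(p.1 + p.2 + 1, p.1 - p.2), by simp [hs]; omega⟩) ⟨?_, ?_⟩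
    · rintro ⟨u, v⟩ ⟨u', v'⟩ h
      simp only [Subtype.mk.injEq, Prod.mk.injEq] at h
      have : u = u' ∧ v = v' := by omega
      exact Prod.ext this.1 this.2
    · rintro ⟨⟨m, n⟩, h⟩
      simp only [hs, Set.mem_setOf_eq, Set.mem_compl_iff] at h
      refine ⟨((m + n - 1) / 2, (m - n - 1) / 2), ?_⟩
      simp only [Subtype.mk.injEq, Prod.mk.injEq]
      omega
  have h1 : ∑' (x : s), F x = ∑' p : ℤ × ℤ, F (p.1 + p.2, p.1 - p.2) :=
    (e1.tsum_eq (fun x : s => F x)).symm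
  have h2 : ∑' (x : (sᶜ : Set (ℤ × ℤ))), F x = ∑' p : ℤ × ℤ, F (p.1 + p.2 + 1, p.1 - p.2) :=
    (e2.tsum_eq (fun x : (sᶜ : Set (ℤ × ℤ)) => F x)).symm
  rw [← h1, ← h2, Summable.tsum_add_tsum_compl (s := s) (hF.subtype s) (hF.subtype sᶜ)]


noncomputable def S3' (q : ℝ) : ℝ := ∑' n : ℤ, q ^ ((n : ℝ) ^ 2)
noncomputable def S2' (q : ℝ) : ℝ := ∑' n : ℤ, q ^ ((n : ℝ) * ((n : ℝ) + 1))
noncomputable def S4' (q : ℝ) : ℝ := ∑' n : ℤ, ((-1 : ℝ) ^ n) * q ^ ((n : ℝ) ^ 2)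

lemma negone_zpow_mul (a b : ℤ) : (-1:ℝ)^a * (-1:ℝ)^b = (-1:ℝ)^(a+b) :=
  (zpow_add₀ (by norm_num) a b).symm

lemma negone_zpow_two_mul (a : ℤ) : (-1:ℝ)^(2*a) = 1 := by
  rw [zpow_mul]; norm_num

lemma negone_zpow_neg (a : ℤ) : (-1:ℝ)^(-a) = (-1:ℝ)^a := by
  rw [zpow_neg]
  refine inv_eq_of_mul_eq_one_left ?_
  rw [negone_zpow_mul, show a + a = 2*a by ring, negone_zpow_two_mul]


lemma nsum_sq (hq0 : 0 < q) (hq1 : q < 1) : Summable fun n : ℤ => ‖q ^ ((n : ℝ) ^ 2)‖ := by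
  refine Summable.congr (summable_sq hq0 hq1) fun n => ?_
  rw [Real.norm_eq_abs, abs_of_pos (Real.rpow_pos_of_pos hq0 _)]

lemma nsum_tri (hq0 : 0 < q) (hq1 : q < 1) :
    Summable fun n : ℤ => ‖q ^ ((n : ℝ) * ((n : ℝ) + 1))‖ := by
  refine Summable.congr (summable_tri hq0 hq1) fun n => ?_
  rw [Real.norm_eq_abs, abs_of_pos (Real.rpow_pos_of_pos hq0 _)]

lemma nsum_sgn_sq (hq0 : 0 < q) (hq1 : q < 1) :
    Summable fun n : ℤ => ‖(-1:ℝ)^n * q ^ ((n : ℝ) ^ 2)‖ := by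
  refine Summable.congr (summable_sq hq0 hq1) fun n => ?_
  rw [norm_mul, norm_zpow, Real.norm_eq_abs, Real.norm_eq_abs,
    abs_of_pos (Real.rpow_pos_of_pos hq0 _)]
  norm_num

lemma nsum_sgn_tri (hq0 : 0 < q) (hq1 : q < 1) :
    Summable fun n : ℤ => ‖(-1:ℝ)^n * q ^ ((n : ℝ) * ((n : ℝ) + 1))‖ := by
  refine Summable.congr (summable_tri hq0 hq1) fun n => ?_
  rw [norm_mul, norm_zpow, Real.norm_eq_abs, Real.norm_eq_abs,
    abs_of_pos (Real.rpow_pos_of_pos hq0 _)]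
  norm_num

lemma sq_rpow (hq0 : 0 < q) : ∀ c : ℝ, (q^2 : ℝ) ^ c = q ^ (2*c) := by
  intro c
  rw [← Real.rpow_natCast q 2, ← Real.rpow_mul hq0.le]
  norm_num

lemma mul_rpow_self (hq0 : 0 < q) : ∀ a : ℝ, q * q ^ a = q ^ (1+a) := fun a => by
  rw [Real.rpow_add hq0, Real.rpow_one]

lemma E3 (hq0 : 0 < q) (hq1 : q < 1) :
    S3' q ^ 2 = S3' (q^2) ^ 2 + q * S2' (q^2) ^ 2 := by
  have hq20 : 0 < q^2 := by positivity
  have hq21 : q^2 < 1 := by nlinarith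
  have hn := nsum_sq hq0 hq1
  have hn2 := nsum_sq hq20 hq21
  have hn2t := nsum_tri hq20 hq21
  rw [S3', sq, tsum_mul_tsum_of_summable_norm hn hn,
      split_parity _ (summable_mul_of_summable_norm hn hn)]
  congr 1
  · have key : ∀ p : ℤ × ℤ, q ^ (((p.1+p.2 : ℤ):ℝ)^2) * q ^ (((p.1-p.2 : ℤ):ℝ)^2)
        = ((q^2) ^ ((p.1:ℝ)^2)) * ((q^2) ^ ((p.2:ℝ)^2)) := by
      intro p
      rw [sq_rpow hq0, sq_rpow hq0, ← Real.rpow_add hq0, ← Real.rpow_add hq0]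
      congr 1
      push_cast
      ring
    rw [tsum_congr key, ← tsum_mul_tsum_of_summable_norm hn2 hn2, S3']
    ring
  · have key : ∀ p : ℤ × ℤ, q ^ (((p.1+p.2+1 : ℤ):ℝ)^2) * q ^ (((p.1-p.2 : ℤ):ℝ)^2)
        = q * (((q^2) ^ ((p.1:ℝ)*((p.1:ℝ)+1))) * ((q^2) ^ ((p.2:ℝ)*((p.2:ℝ)+1)))) := by
      intro p
      rw [sq_rpow hq0, sq_rpow hq0, ← Real.rpow_add hq0, ← Real.rpow_add hq0,
        mul_rpow_self hq0]
      congr 1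
      push_cast
      ring
    rw [tsum_congr key, tsum_mul_left, ← tsum_mul_tsum_of_summable_norm hn2t hn2t, S2']
    ring

lemma E4 (hq0 : 0 < q) (hq1 : q < 1) :
    S4' q ^ 2 = S3' (q^2) ^ 2 - q * S2' (q^2) ^ 2 := by
  have hq20 : 0 < q^2 := by positivity
  have hq21 : q^2 < 1 := by nlinarith
  have hn := nsum_sgn_sq hq0 hq1
  have hn2 := nsum_sq hq20 hq21
  have hn2t := nsum_tri hq20 hq21
  rw [S4', sq, tsum_mul_tsum_of_summable_norm hn hn,
      split_parity _ (summable_mul_of_summable_norm hn hn), sub_eq_add_neg]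
  congr 1
  · have key : ∀ p : ℤ × ℤ,
        ((-1:ℝ)^(p.1+p.2) * q ^ (((p.1+p.2 : ℤ):ℝ)^2)) *
          ((-1:ℝ)^(p.1-p.2) * q ^ (((p.1-p.2 : ℤ):ℝ)^2))
        = ((q^2) ^ ((p.1:ℝ)^2)) * ((q^2) ^ ((p.2:ℝ)^2)) := by
      intro p
      have s1 : (-1:ℝ)^(p.1+p.2) * (-1:ℝ)^(p.1-p.2) = 1 := by
        rw [negone_zpow_mul, show p.1+p.2+(p.1-p.2) = 2*p.1 by ring, negone_zpow_two_mul]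
      have s2 : q ^ (((p.1+p.2:ℤ):ℝ)^2) * q ^ (((p.1-p.2:ℤ):ℝ)^2)
          = (q^2)^((p.1:ℝ)^2) * (q^2)^((p.2:ℝ)^2) := by
        rw [sq_rpow hq0, sq_rpow hq0, ← Real.rpow_add hq0, ← Real.rpow_add hq0]
        congr 1
        push_cast
        ring
      rw [mul_mul_mul_comm, s1, s2, one_mul]
    rw [tsum_congr key, ← tsum_mul_tsum_of_summable_norm hn2 hn2, S3']
    ring
  · have key : ∀ p : ℤ × ℤ,
        ((-1:ℝ)^(p.1+p.2+1) * q ^ (((p.1+p.2+1 : ℤ):ℝ)^2)) *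
          ((-1:ℝ)^(p.1-p.2) * q ^ (((p.1-p.2 : ℤ):ℝ)^2))
        = -(q * ((q^2)^((p.1:ℝ)*((p.1:ℝ)+1)) * (q^2)^((p.2:ℝ)*((p.2:ℝ)+1)))) := by
      intro p
      have s1 : (-1:ℝ)^(p.1+p.2+1) * (-1:ℝ)^(p.1-p.2) = -1 := by
        rw [negone_zpow_mul, show p.1+p.2+1+(p.1-p.2) = 2*p.1+1 by ring,
          zpow_add₀ (by norm_num : (-1:ℝ) ≠ 0), negone_zpow_two_mul, one_mul, zpow_one]
      have s2 : q ^ (((p.1+p.2+1:ℤ):ℝ)^2) * q ^ (((p.1-p.2:ℤ):ℝ)^2)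
          = q * ((q^2)^((p.1:ℝ)*((p.1:ℝ)+1)) * (q^2)^((p.2:ℝ)*((p.2:ℝ)+1))) := by
        rw [sq_rpow hq0, sq_rpow hq0, ← Real.rpow_add hq0, ← Real.rpow_add hq0,
          mul_rpow_self hq0]
        congr 1
        push_cast
        ring
      rw [mul_mul_mul_comm, s1, s2, neg_one_mul]
    rw [tsum_congr key, tsum_neg, tsum_mul_left,
      ← tsum_mul_tsum_of_summable_norm hn2t hn2t, S2']
    ring

lemma alt_tri_zero (r : ℝ) : ∑' u : ℤ, (-1:ℝ)^u * r ^ ((u:ℝ) * ((u:ℝ) + 1)) = 0 := by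
  set g : ℤ → ℝ := fun u => (-1:ℝ)^u * r ^ ((u:ℝ) * ((u:ℝ) + 1)) with hg
  have he : ∀ u : ℤ, g ((Equiv.subLeft (-1 : ℤ)) u) = - g u := by
    intro u
    simp only [hg, Equiv.subLeft_apply]
    have s1 : (-1:ℝ)^(-1 - u) = -(-1:ℝ)^u := by
      rw [show -1 - u = -(1 + u) by ring, negone_zpow_neg,
        zpow_add₀ (by norm_num : (-1:ℝ) ≠ 0), zpow_one, neg_one_mul]
    have s2 : (((-1 - u : ℤ):ℝ)) * (((-1 - u : ℤ):ℝ) + 1) = (u:ℝ) * ((u:ℝ) + 1) := by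
      push_cast
      ring
    rw [s1, s2, neg_mul]
  have h1 : ∑' u : ℤ, g u = ∑' u : ℤ, g ((Equiv.subLeft (-1 : ℤ)) u) :=
    ((Equiv.subLeft (-1 : ℤ)).tsum_eq g).symm
  have h2 : ∑' u : ℤ, g ((Equiv.subLeft (-1 : ℤ)) u) = - ∑' u : ℤ, g u := by
    rw [tsum_congr he, tsum_neg]
  linarith [h1, h2]

lemma E34 (hq0 : 0 < q) (hq1 : q < 1) :
    S3' q * S4' q = S4' (q^2) ^ 2 := by
  have hq20 : 0 < q^2 := by positivity
  have hq21 : q^2 < 1 := by nlinarith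
  have hn := nsum_sq hq0 hq1
  have hn4 := nsum_sgn_sq hq0 hq1
  have hn2 := nsum_sgn_sq hq20 hq21
  have hn2t := nsum_sgn_tri hq20 hq21
  rw [S3', S4', tsum_mul_tsum_of_summable_norm hn hn4,
      split_parity _ (summable_mul_of_summable_norm hn hn4)]
  have heven : (∑' p : ℤ × ℤ, q ^ (((p.1+p.2 : ℤ):ℝ)^2) *
      ((-1:ℝ)^(p.1-p.2) * q ^ (((p.1-p.2 : ℤ):ℝ)^2))) = S4' (q^2) ^ 2 := by
    have key : ∀ p : ℤ × ℤ, q ^ (((p.1+p.2 : ℤ):ℝ)^2) *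
        ((-1:ℝ)^(p.1-p.2) * q ^ (((p.1-p.2 : ℤ):ℝ)^2))
        = ((-1:ℝ)^p.1 * (q^2)^((p.1:ℝ)^2)) * ((-1:ℝ)^p.2 * (q^2)^((p.2:ℝ)^2)) := by
      intro p
      have s1 : (-1:ℝ)^(p.1-p.2) = (-1:ℝ)^p.1 * (-1:ℝ)^p.2 := by
        rw [negone_zpow_mul, show p.1 + p.2 = p.1 - p.2 + 2*p.2 by ring,
          zpow_add₀ (by norm_num : (-1:ℝ) ≠ 0), negone_zpow_two_mul, mul_one]
      have s2 : q ^ (((p.1+p.2:ℤ):ℝ)^2) * q ^ (((p.1-p.2:ℤ):ℝ)^2)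
          = (q^2)^((p.1:ℝ)^2) * (q^2)^((p.2:ℝ)^2) := by
        rw [sq_rpow hq0, sq_rpow hq0, ← Real.rpow_add hq0, ← Real.rpow_add hq0]
        congr 1
        push_cast
        ring
      calc q ^ (((p.1+p.2 : ℤ):ℝ)^2) * ((-1:ℝ)^(p.1-p.2) * q ^ (((p.1-p.2 : ℤ):ℝ)^2))
          = ((-1:ℝ)^(p.1-p.2)) * (q ^ (((p.1+p.2:ℤ):ℝ)^2) * q ^ (((p.1-p.2:ℤ):ℝ)^2)) := by
            ring
        _ = ((-1:ℝ)^p.1 * (-1:ℝ)^p.2) * ((q^2)^((p.1:ℝ)^2) * (q^2)^((p.2:ℝ)^2)) := by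
            rw [s1, s2]
        _ = ((-1:ℝ)^p.1 * (q^2)^((p.1:ℝ)^2)) * ((-1:ℝ)^p.2 * (q^2)^((p.2:ℝ)^2)) := by
            ring
    rw [tsum_congr key, ← tsum_mul_tsum_of_summable_norm hn2 hn2, S4']
    ring
  have hodd : (∑' p : ℤ × ℤ, q ^ (((p.1+p.2+1 : ℤ):ℝ)^2) *
      ((-1:ℝ)^(p.1-p.2) * q ^ (((p.1-p.2 : ℤ):ℝ)^2))) = 0 := by
    have key : ∀ p : ℤ × ℤ, q ^ (((p.1+p.2+1 : ℤ):ℝ)^2) *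
        ((-1:ℝ)^(p.1-p.2) * q ^ (((p.1-p.2 : ℤ):ℝ)^2))
        = q * (((-1:ℝ)^p.1 * (q^2)^((p.1:ℝ)*((p.1:ℝ)+1))) *
            ((-1:ℝ)^p.2 * (q^2)^((p.2:ℝ)*((p.2:ℝ)+1)))) := by
      intro p
      have s1 : (-1:ℝ)^(p.1-p.2) = (-1:ℝ)^p.1 * (-1:ℝ)^p.2 := by
        rw [negone_zpow_mul, show p.1 + p.2 = p.1 - p.2 + 2*p.2 by ring,
          zpow_add₀ (by norm_num : (-1:ℝ) ≠ 0), negone_zpow_two_mul, mul_one]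
      have s2 : q ^ (((p.1+p.2+1:ℤ):ℝ)^2) * q ^ (((p.1-p.2:ℤ):ℝ)^2)
          = q * ((q^2)^((p.1:ℝ)*((p.1:ℝ)+1)) * (q^2)^((p.2:ℝ)*((p.2:ℝ)+1))) := by
        rw [sq_rpow hq0, sq_rpow hq0, ← Real.rpow_add hq0, ← Real.rpow_add hq0,
          mul_rpow_self hq0]
        congr 1
        push_cast
        ring
      calc q ^ (((p.1+p.2+1 : ℤ):ℝ)^2) * ((-1:ℝ)^(p.1-p.2) * q ^ (((p.1-p.2 : ℤ):ℝ)^2))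
          = ((-1:ℝ)^(p.1-p.2)) * (q ^ (((p.1+p.2+1:ℤ):ℝ)^2) * q ^ (((p.1-p.2:ℤ):ℝ)^2)) := by
            ring
        _ = ((-1:ℝ)^p.1 * (-1:ℝ)^p.2) *
              (q * ((q^2)^((p.1:ℝ)*((p.1:ℝ)+1)) * (q^2)^((p.2:ℝ)*((p.2:ℝ)+1)))) := by
            rw [s1, s2]
        _ = q * (((-1:ℝ)^p.1 * (q^2)^((p.1:ℝ)*((p.1:ℝ)+1))) *
              ((-1:ℝ)^p.2 * (q^2)^((p.2:ℝ)*((p.2:ℝ)+1)))) := by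
            ring
    rw [tsum_congr key, tsum_mul_left, ← tsum_mul_tsum_of_summable_norm hn2t hn2t,
      alt_tri_zero]
    ring
  rw [heven, hodd, add_zero]


lemma S3'_pos (hq0 : 0 < q) (hq1 : q < 1) : 0 < S3' q :=
  Summable.tsum_pos (summable_sq hq0 hq1) (fun i => (Real.rpow_pos_of_pos hq0 _).le) 0
    (Real.rpow_pos_of_pos hq0 _)

lemma S2'_pos (hq0 : 0 < q) (hq1 : q < 1) : 0 < S2' q :=
  Summable.tsum_pos (summable_tri hq0 hq1) (fun i => (Real.rpow_pos_of_pos hq0 _).le) 0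
    (Real.rpow_pos_of_pos hq0 _)

lemma B3 (hq0 : 0 < q) (hq1 : q < 1) : theta3 q = S3' q := by
  have h1 : Summable (fun n : ℕ => q ^ ((((n:ℕ):ℤ):ℝ)^2)) :=
    by
    have H := (summable_sq hq0 hq1).comp_injective (i := fun n : ℕ => (n : ℤ)) (fun a b h => by simpa using h)
    simp only [Function.comp_def] at H
    exact H
  have h2 : Summable (fun n : ℕ => q ^ ((((-((n:ℕ)+1)):ℤ):ℝ)^2)) :=
    by
    have H := (summable_sq hq0 hq1).comp_injective (i := fun n : ℕ => (-((n:ℕ)+1) : ℤ)) (fun a b h => by simp only [neg_inj, add_left_inj, Nat.cast_inj] at h; exact h)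
    simp only [Function.comp_def] at H
    exact H
  have e1 : ∀ n : ℕ, q ^ (((((n+1:ℕ)):ℤ):ℝ)^2) = q ^ ((n+1)^2) := by
    intro n
    rw [← Real.rpow_natCast q ((n+1)^2)]
    congr 1
    push_cast
    ring
  have e2 : ∀ n : ℕ, q ^ ((((-((n:ℕ)+1)):ℤ):ℝ)^2) = q ^ ((n+1)^2) := by
    intro n
    rw [← Real.rpow_natCast q ((n+1)^2)]
    congr 1
    push_cast
    ring
  have e0 : q ^ ((((0:ℕ):ℤ):ℝ)^2) = 1 := by
    norm_num
  have key := tsum_of_nat_of_neg_add_one (f := fun n : ℤ => q ^ ((n:ℝ)^2)) h1 h2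
  rw [S3', key, Summable.tsum_eq_zero_add h1, e0, tsum_congr e1, tsum_congr e2, theta3]
  ring

lemma B2 (hq0 : 0 < q) (hq1 : q < 1) : theta2 q = q ^ ((1:ℝ)/4) * S2' q := by
  have h1 : Summable (fun n : ℕ => q ^ ((((n:ℕ):ℤ):ℝ) * ((((n:ℕ):ℤ):ℝ)+1))) :=
    by
    have H := (summable_tri hq0 hq1).comp_injective (i := fun n : ℕ => (n : ℤ)) (fun a b h => by simpa using h)
    simp only [Function.comp_def] at H
    exact H
  have h2 : Summable (fun n : ℕ => q ^ ((((-((n:ℕ)+1)):ℤ):ℝ) * ((((-((n:ℕ)+1)):ℤ):ℝ)+1))) :=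
    by
    have H := (summable_tri hq0 hq1).comp_injective (i := fun n : ℕ => (-((n:ℕ)+1) : ℤ)) (fun a b h => by simp only [neg_inj, add_left_inj, Nat.cast_inj] at h; exact h)
    simp only [Function.comp_def] at H
    exact H
  have e1 : ∀ n : ℕ, q ^ ((((n:ℕ):ℤ):ℝ) * ((((n:ℕ):ℤ):ℝ)+1)) = q ^ (n*(n+1)) := by
    intro n
    rw [← Real.rpow_natCast q (n*(n+1))]
    congr 1
    push_cast
    ring
  have e2 : ∀ n : ℕ, q ^ ((((-((n:ℕ)+1)):ℤ):ℝ) * ((((-((n:ℕ)+1)):ℤ):ℝ)+1)) = q ^ (n*(n+1)) := by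
    intro n
    rw [← Real.rpow_natCast q (n*(n+1))]
    congr 1
    push_cast
    ring
  have key := tsum_of_nat_of_neg_add_one
    (f := fun n : ℤ => q ^ ((n:ℝ) * ((n:ℝ)+1))) h1 h2
  rw [S2', key, tsum_congr e1, tsum_congr e2, theta2]
  ring

lemma S4'_pos (hq0 : 0 < q) (hq3 : q < 1/3) : 0 < S4' q := by
  have hq1 : q < 1 := by linarith
  have h1 : Summable (fun n : ℕ => (-1:ℝ)^((n:ℕ):ℤ) * q ^ ((((n:ℕ):ℤ):ℝ)^2)) := by
    have H := (summable_sgn_sq hq0 hq1).comp_injective (i := fun n : ℕ => (n : ℤ))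
      (fun a b h => by simpa using h)
    simp only [Function.comp_def] at H
    exact H
  have h2 : Summable (fun n : ℕ => (-1:ℝ)^((-((n:ℕ)+1)):ℤ) * q ^ ((((-((n:ℕ)+1)):ℤ):ℝ)^2)) := by
    have H := (summable_sgn_sq hq0 hq1).comp_injective (i := fun n : ℕ => (-((n:ℕ)+1) : ℤ))
      (fun a b h => by simp only [neg_inj, add_left_inj, Nat.cast_inj] at h; exact h)
    simp only [Function.comp_def] at H
    exact H
  have key := tsum_of_nat_of_neg_add_one
    (f := fun n : ℤ => (-1:ℝ)^n * q ^ ((n:ℝ)^2)) h1 h2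
  have hgeo : Summable (fun n : ℕ => q ^ (n+1)) := by
    refine Summable.congr ((summable_geometric_of_lt_one hq0.le hq1).mul_left q) fun n => ?_
    rw [← pow_succ']
  have hgeo_sum : ∑' n : ℕ, q ^ (n+1) = q / (1-q) := by
    have : ∀ n : ℕ, q ^ (n+1) = q * q ^ n := fun n => pow_succ' q n
    rw [tsum_congr this, tsum_mul_left, tsum_geometric_of_lt_one hq0.le hq1, div_eq_mul_inv]
  have bound : ∀ h : ℕ → ℝ, (∀ n, |h n| ≤ q ^ (n+1)) → |∑' n, h n| ≤ q/(1-q) := by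
    intro h hb
    have habs : Summable (fun n => |h n|) :=
      Summable.of_nonneg_of_le (fun n => abs_nonneg _) hb hgeo
    calc |∑' n, h n| ≤ ∑' n, |h n| := by
          have := norm_tsum_le_tsum_norm (f := h) (by simpa only [Real.norm_eq_abs] using habs)
          simpa only [Real.norm_eq_abs] using this
      _ ≤ ∑' n : ℕ, q ^ (n+1) := Summable.tsum_le_tsum hb habs hgeo
      _ = q/(1-q) := hgeo_sum
  have habs_term : ∀ (k : ℤ) (n : ℕ), ((k:ℝ)^2 = ((n:ℝ)+1)^2) →
      |(-1:ℝ)^k * q ^ ((k:ℝ)^2)| ≤ q ^ (n+1) := by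
    intro k n hk
    have hx : (-1:ℝ)^k = 1 ∨ (-1:ℝ)^k = -1 := mul_self_eq_one_iff.mp
      (by rw [negone_zpow_mul, show k+k = 2*k by ring, negone_zpow_two_mul])
    have habs1 : |(-1:ℝ)^k| = 1 := by rcases hx with hx|hx <;> rw [hx] <;> norm_num
    rw [abs_mul, habs1, one_mul,
      abs_of_pos (Real.rpow_pos_of_pos hq0 _), hk,
      ← Real.rpow_natCast q (n+1)]
    apply Real.rpow_le_rpow_of_exponent_ge hq0 hq1.le
    push_cast
    nlinarith [Nat.cast_nonneg (α := ℝ) n]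
  have e0 : (-1:ℝ)^((0:ℕ):ℤ) * q ^ ((((0:ℕ):ℤ):ℝ)^2) = 1 := by norm_num
  have hT1 : |∑' n : ℕ, (-1:ℝ)^(((n+1:ℕ)):ℤ) * q ^ (((((n+1:ℕ)):ℤ):ℝ)^2)| ≤ q/(1-q) := by
    refine bound _ fun n => habs_term _ n ?_
    push_cast
    ring
  have hT2 : |∑' n : ℕ, (-1:ℝ)^((-((n:ℕ)+1)):ℤ) * q ^ ((((-((n:ℕ)+1)):ℤ):ℝ)^2)| ≤ q/(1-q) := by
    refine bound _ fun n => habs_term _ n ?_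
    push_cast
    ring
  have hc : q/(1-q) < 1/2 := by
    rw [div_lt_iff₀ (by linarith)]
    linarith
  rw [S4', key, Summable.tsum_eq_zero_add h1, e0]
  have := abs_le.mp hT1
  have := abs_le.mp hT2
  linarith [this.1]


end ThetaAux

theorem stmt_9 (L C : ℝ) (hL : L = lambdaStar (38/5))
    (hC : C = (1/16) * (1/L - L) ^ 2) :
    lambdaStar (19/10) = Real.sqrt ((Real.sqrt (4 * C + 1) - 1) / C) / Real.sqrt 2 := by
  simp only [lambdaStar] at hL ⊢
  have h385 : Real.sqrt (38/5 : ℝ) = 2 * Real.sqrt (19/10) := by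
    rw [show (38/5:ℝ) = 2^2 * (19/10) by norm_num, Real.sqrt_mul (by positivity),
      Real.sqrt_sq (by norm_num)]
  rw [h385] at hL
  set s := Real.sqrt (19/10 : ℝ) with hsdef
  have hs0 : 0 < s := Real.sqrt_pos.mpr (by norm_num)
  have hs1 : 1 ≤ s := by
    rw [hsdef, show (1:ℝ) = Real.sqrt 1 by simp]
    exact Real.sqrt_le_sqrt (by norm_num)
  have harg2 : Real.exp (-(π * (2*s))) = (Real.exp (-(π * s)))^2 := by
    rw [sq, ← Real.exp_add]
    congr 1
    ring
  rw [harg2] at hL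
  set Q := Real.exp (-(π * s)) with hQdef
  set p := Real.exp (-(π * s)/2) with hpdef
  have hp0 : 0 < p := Real.exp_pos _
  have hQ0 : 0 < Q := Real.exp_pos _
  have hpQ : p^2 = Q := by
    rw [hpdef, hQdef, sq, ← Real.exp_add]
    congr 1
    ring
  have hexp15 : (3:ℝ) < Real.exp (3/2) := by
    have h75 : (1.75:ℝ) ≤ Real.exp (3/4) := by
      have := Real.add_one_le_exp (3/4 : ℝ)
      linarith
    have he : Real.exp (3/2) = Real.exp (3/4) * Real.exp (3/4) := by
      rw [← Real.exp_add]
      norm_num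
    nlinarith [Real.exp_pos (3/4:ℝ)]
  have hpi : (3:ℝ) ≤ π := by linarith [Real.pi_gt_three]
  have hp3 : p < 1/3 := by
    have h1 : (3:ℝ)/2 ≤ π * s / 2 := by nlinarith
    have h2 : (3:ℝ) < Real.exp (π * s / 2) := lt_of_lt_of_le hexp15 (Real.exp_le_exp.mpr h1)
    have h3 : p = (Real.exp (π * s / 2))⁻¹ := by
      rw [hpdef, ← Real.exp_neg]
      congr 1
      ring
    rw [h3, show (1:ℝ)/3 = (3:ℝ)⁻¹ by norm_num]
    exact inv_strictAnti₀ (by norm_num) h2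
  have hp1 : p < 1 := by linarith
  have hQ3 : Q < 1/3 := by nlinarith [hpQ]
  have hQ1 : Q < 1 := by linarith
  have hQ20 : 0 < Q^2 := by positivity
  have hQ21 : Q^2 < 1 := by nlinarith
  -- squared theta2
  have hrh : ∀ r : ℝ, 0 < r → (r^2) ^ ((1:ℝ)/2) = r := by
    intro r hr
    rw [← Real.rpow_natCast r 2, ← Real.rpow_mul hr.le]
    norm_num
  have hsqtheta2 : ∀ r : ℝ, 0 < r → r < 1 → theta2 r ^ 2 = r ^ ((1:ℝ)/2) * S2' r ^ 2 := by
    intro r hr0 hr1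
    rw [B2 hr0 hr1, mul_pow, ← Real.rpow_natCast (r ^ ((1:ℝ)/4)) 2, ← Real.rpow_mul hr0.le]
    norm_num
  have hT : theta2 Q ^ 2 = p * S2' Q ^ 2 := by
    rw [hsqtheta2 Q hQ0 hQ1, ← hpQ, hrh p hp0]
  have hT2 : theta2 (Q^2) ^ 2 = Q * S2' (Q^2) ^ 2 := by
    rw [hsqtheta2 _ hQ20 hQ21, hrh Q hQ0]
  have e3p := E3 hp0 hp1
  have e4p := E4 hp0 hp1
  have e34p := E34 hp0 hp1
  rw [hpQ] at e3p e4p e34p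
  have e3Q := E3 hQ0 hQ1
  have e4Q := E4 hQ0 hQ1
  -- positivity
  have hb : 0 < S3' Q := S3'_pos hQ0 hQ1
  have hd : 0 < S4' Q := S4'_pos hQ0 hQ3
  have hs2Q : 0 < S2' Q := S2'_pos hQ0 hQ1
  have hs2Q2 : 0 < S2' (Q^2) := S2'_pos hQ20 hQ21
  have hTpos : 0 < theta2 Q ^ 2 := by
    rw [hT]
    positivity
  -- Jacobi
  have hA : S3' p ^ 2 = S3' Q ^ 2 + theta2 Q ^ 2 := by
    rw [hT]
    linarith [e3p]
  have hB : S4' p ^ 2 = S3' Q ^ 2 - theta2 Q ^ 2 := by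
    rw [hT]
    linarith [e4p]
  have hJac : (theta2 Q ^ 2) ^ 2 = (S3' Q ^ 2) ^ 2 - (S4' Q ^ 2) ^ 2 := by
    have h1 : (S4' Q ^ 2) ^ 2 = S3' p ^ 2 * S4' p ^ 2 := by
      rw [← e34p]
      ring
    rw [hA, hB] at h1
    linear_combination h1
  -- theta at Q^2
  have hth2sq : theta2 (Q^2) ^ 2 = (S3' Q ^ 2 - S4' Q ^ 2)/2 := by
    rw [hT2]
    linarith [e4Q]
  have hth3sq : theta3 (Q^2) ^ 2 = (S3' Q ^ 2 + S4' Q ^ 2)/2 := by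
    rw [B3 hQ20 hQ21]
    linarith [e3Q, e4Q]
  have hbd : S4' Q ^ 2 < S3' Q ^ 2 := by
    have h0 : 0 < Q * S2' (Q^2) ^ 2 := by positivity
    linarith [e3Q, e4Q]
  -- abbreviations (opaque)
  obtain ⟨X, hXdef⟩ : ∃ x, S3' Q ^ 2 = x := ⟨_, rfl⟩
  obtain ⟨D, hDdef⟩ : ∃ x, S4' Q ^ 2 = x := ⟨_, rfl⟩
  obtain ⟨T, hTdef⟩ : ∃ x, theta2 Q ^ 2 = x := ⟨_, rfl⟩
  rw [hXdef, hDdef] at hth2sq hth3sq hbd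
  rw [hXdef, hDdef, hTdef] at hJac
  rw [hTdef] at hTpos
  have hX : 0 < X := hXdef ▸ (by positivity)
  have hD : 0 < D := hDdef ▸ (by positivity)
  have hsum0 : (0:ℝ) < X + D := by linarith
  have hdiff0 : (0:ℝ) < X - D := by linarith
  have hsumne : X + D ≠ 0 := ne_of_gt hsum0
  have hdiffne : X - D ≠ 0 := ne_of_gt hdiff0
  have hXne : X ≠ 0 := ne_of_gt hX
  have hsqdiff : (0:ℝ) < X^2 - D^2 := by
    have hr : (X+D)*(X-D) = X^2 - D^2 := by ring
    linarith [mul_pos hsum0 hdiff0]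
  have hsqdiffne : X^2 - D^2 ≠ 0 := ne_of_gt hsqdiff
  have hLval : L = (X - D) / (X + D) := by
    rw [hL, hth2sq, hth3sq, div_div_div_comm]
    norm_num
  have hLne : L ≠ 0 := by
    rw [hLval]
    positivity
  have hC' : C = X^2*D^2/(X^2-D^2)^2 := by
    rw [hC, hLval]
    field_simp
    ring
  have h4C : 4*C + 1 = ((X^2+D^2)/(X^2-D^2))^2 := by
    rw [hC']
    field_simp
    ring
  have hsq1 : Real.sqrt (4*C+1) = (X^2+D^2)/(X^2-D^2) := by
    rw [h4C, Real.sqrt_sq (by positivity)]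
  have h5 : (Real.sqrt (4*C+1) - 1)/C = 2*(X^2-D^2)/X^2 := by
    rw [hsq1, hC']
    field_simp
    ring
  have h6 : 2*(X^2-D^2)/X^2 = (Real.sqrt 2 * (T/X))^2 := by
    rw [← hJac, mul_pow, Real.sq_sqrt (by norm_num : (0:ℝ) ≤ 2), div_pow]
    ring
  have hsqrt2pos : (0:ℝ) < Real.sqrt 2 := Real.sqrt_pos.mpr (by norm_num)
  have hTX : 0 < T / X := by positivity
  rw [B3 hQ0 hQ1, hXdef, hTdef, h5, h6, Real.sqrt_sq (by positivity)]
  exact (mul_div_cancel_left₀ _ (ne_of_gt hsqrt2pos)).symm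
end

section
/- For every real n > 0, Ramanujan's class invariants satisfy the modular relation g_{4n} = 2^(1/4) · g_n · G_n. -/
open Real

lemma summable_log_one_add {f : ℕ → ℝ} (hf : Summable f) :
    Summable fun n => Real.log (1 + f n) := by
  have hg : DifferentiableAt ℝ (fun x : ℝ ↦ Real.log (1 + x)) 0 := by
    have h1 : (1:ℝ) + 0 ≠ 0 := by norm_num
    fun_prop (disch := norm_num)
  have hO : (fun x : ℝ ↦ Real.log (1 + x)) =O[nhds 0] id := by
    have h := hg.isBigO_sub
    simp only [add_zero, Real.log_one, sub_zero] at h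
    exact h
  exact hO.comp_summable hf

lemma multipliable_one_add {f : ℕ → ℝ} (hf : Summable f) (hpos : ∀ n, 0 < 1 + f n) :
    Multipliable fun n => 1 + f n :=
  Real.multipliable_of_summable_log hpos
    (summable_log_one_add hf)

theorem stmt_19 (n : ℝ) (hn : 0 < n) :
    gn (4 * n) = 2 ^ ((1:ℝ)/4) * gn n * Gn n := by
  have hs : 0 < Real.sqrt n := Real.sqrt_pos.mpr hn
  have h4 : Real.sqrt (4 * n) = 2 * Real.sqrt n := by
    rw [show (4:ℝ) * n = (2 * Real.sqrt n)^2 by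
      rw [mul_pow, Real.sq_sqrt hn.le]; ring]
    exact Real.sqrt_sq (by positivity)
  set c := π * Real.sqrt n with hcdef
  have hc : 0 < c := by positivity
  set y : ℕ → ℝ := fun j => Real.exp (-((2*(j:ℝ)+1) * c)) with hy
  have hypos : ∀ j, 0 < y j := fun j => Real.exp_pos _
  have hylt : ∀ j, y j < 1 := by
    intro j
    apply Real.exp_lt_one_iff.mpr
    have : (0:ℝ) ≤ 2*(j:ℝ) := by positivity
    nlinarith
  have hsum : Summable y := by
    have h1 : Real.exp (-(2*c)) < 1 := Real.exp_lt_one_iff.mpr (by linarith)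
    have hgeo := (summable_geometric_of_lt_one (Real.exp_nonneg _) h1).mul_left
      (Real.exp (-c))
    apply hgeo.congr
    intro j
    rw [← Real.exp_nat_mul, ← Real.exp_add, hy]
    congr 1
    ring
  have hmadd : Multipliable fun j => 1 + y j :=
    multipliable_one_add hsum (fun j => by have := hypos j; linarith)
  have hmsub : Multipliable fun j => 1 - y j := by
    have := multipliable_one_add hsum.neg (fun j => by have := hylt j; linarith [hylt j])
    exact (multipliable_congr (fun j => by ring : ∀ j, (1:ℝ) + -(y j) = 1 - y j)).mp this
  have hprod : (∏' j : ℕ, (1 - (y j)^2)) = (∏' j, (1 - y j)) * (∏' j, (1 + y j)) := by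
    rw [← Multipliable.tprod_mul hmsub hmadd]
    exact tprod_congr fun j => by ring
  have hterm : ∀ j : ℕ, (1:ℝ) - Real.exp (-((2*(j:ℝ)+1) * π * (2 * Real.sqrt n)))
      = 1 - (y j)^2 := by
    intro j
    have he : -((2*(j:ℝ)+1) * π * (2 * Real.sqrt n))
        = (-((2*(j:ℝ)+1) * c)) + (-((2*(j:ℝ)+1) * c)) := by rw [hcdef]; ring
    rw [he, Real.exp_add, hy]; ring
  have htermsub : ∀ j : ℕ, (1:ℝ) - Real.exp (-((2*(j:ℝ)+1) * π * Real.sqrt n)) = 1 - y j := by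
    intro j; rw [hy, hcdef, mul_assoc]
  have htermadd : ∀ j : ℕ, (1:ℝ) + Real.exp (-((2*(j:ℝ)+1) * π * Real.sqrt n)) = 1 + y j := by
    intro j; rw [hy, hcdef, mul_assoc]
  unfold gn Gn
  rw [h4, tprod_congr hterm, tprod_congr htermsub, tprod_congr htermadd, hprod]
  have h2 : (2:ℝ) ^ ((1:ℝ)/4) * (2:ℝ) ^ (-(1:ℝ)/4) * (2:ℝ) ^ (-(1:ℝ)/4)
      = (2:ℝ) ^ (-(1:ℝ)/4) := by
    rw [← Real.rpow_add two_pos, ← Real.rpow_add two_pos]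
    norm_num
  have hE : Real.exp (π * Real.sqrt n / 24) * Real.exp (π * Real.sqrt n / 24)
      = Real.exp (π * (2 * Real.sqrt n) / 24) := by
    rw [← Real.exp_add]; ring_nf
  conv_lhs => rw [← h2, ← hE]
  ring
end
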